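/- Fix ε > 0 and p ≥ 1. For R ≥ R₀(ε) sufficiently large, ∫_{|w|>R} |w|^{pR} · (R²/(e|w|²))^{pR²/4} dm₂(w) ≤ C(ε,p) R² · ∫_{|ζ|>1} (1/(e|ζ|²))^{pεR²/5} dm₂(ζ), and the right-hand side tends to 0 as R → ∞. -/

import Mathlib

open MeasureTheory

theorem stmt_15 (p : ℝ) (hp : 1 ≤ p) :
    Filter.Tendsto (fun R : ℝ =>
      ∫ w in {w : ℂ | R < ‖w‖},
        ‖w‖ ^ (p * R) * (R ^ 2 / (Real.exp 1 * ‖w‖ ^ 2)) ^ (p * R ^ 2 / 4))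
      Filter.atTop (nhds 0) := by
  classical
  set h : ℂ → ℝ := fun w => (1 + ‖w‖) ^ (-3 : ℝ) with hh
  have hint : Integrable h := by
    have : ((Module.finrank ℝ ℂ : ℝ)) < 3 := by
      simp [Complex.finrank_real_complex]; norm_num
    simpa [hh] using integrable_one_add_norm (μ := (volume : Measure ℂ)) this
  have hnonneg : ∀ w : ℂ, 0 ≤ h w := fun w => Real.rpow_nonneg (by positivity) _
  set M : ℝ := ∫ w, h w with hM
  have hM0 : 0 ≤ M := integral_nonneg hnonneg
  set K : ℝ → ℝ := fun R => 8 * Real.exp ((p * R + 3) * Real.log R - p * R ^ 2 / 4) with hK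
  have hK0 : ∀ R, 0 ≤ K R := fun R => by positivity
  -- key pointwise bound
  have key : ∀ R : ℝ, 5 ≤ R → ∀ w : ℂ, R < ‖w‖ →
      ‖w‖ ^ (p * R) * (R ^ 2 / (Real.exp 1 * ‖w‖ ^ 2)) ^ (p * R ^ 2 / 4)
        ≤ K R * h w := by
    intro R hR w hw
    set t := ‖w‖ with htdef
    have hR0 : (0 : ℝ) < R := by linarith
    have ht0 : (0 : ℝ) < t := lt_trans hR0 hw
    have hbase : (0 : ℝ) < R ^ 2 / (Real.exp 1 * t ^ 2) := by positivity
    have hlogR0 : 0 ≤ Real.log R := Real.log_nonneg (by linarith)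
    have hlogle : Real.log R ≤ Real.log t := Real.log_le_log hR0 hw.le
    -- rewrite LHS via exp
    have hLHS : t ^ (p * R) * (R ^ 2 / (Real.exp 1 * t ^ 2)) ^ (p * R ^ 2 / 4)
        = Real.exp (p * R * Real.log t
            + p * R ^ 2 / 4 * (2 * Real.log R - 1 - 2 * Real.log t)) := by
      rw [Real.rpow_def_of_pos ht0, Real.rpow_def_of_pos hbase, ← Real.exp_add]
      congr 1
      have hlb : Real.log (R ^ 2 / (Real.exp 1 * t ^ 2))
          = 2 * Real.log R - 1 - 2 * Real.log t := by
        rw [Real.log_div (by positivity) (by positivity),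
          Real.log_mul (Real.exp_ne_zero 1) (by positivity),
          Real.log_exp, Real.log_pow, Real.log_pow]
        push_cast; ring
      rw [hlb]; ring
    -- lower bound for RHS
    have hRHS : Real.exp ((p * R + 3) * Real.log R - p * R ^ 2 / 4 - 3 * Real.log t)
        ≤ K R * h w := by
      have ht1 : (1 : ℝ) ≤ t := by linarith
      have h2t : (2 * t) ^ (-3 : ℝ) ≤ (1 + t) ^ (-3 : ℝ) :=
        Real.rpow_le_rpow_of_nonpos (by linarith) (by linarith) (by norm_num)
      have h28 : (2 : ℝ) ^ (-3 : ℝ) = 1 / 8 := by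
        rw [show (-3 : ℝ) = ((-3 : ℤ) : ℝ) by norm_num, Real.rpow_intCast]
        norm_num
      have h2t' : (2 * t) ^ (-3 : ℝ) = (1 / 8) * Real.exp (-3 * Real.log t) := by
        rw [Real.mul_rpow (by norm_num) ht0.le, Real.rpow_def_of_pos ht0,
          mul_comm (Real.log t) (-3 : ℝ), h28]
      have hhw : h w = (1 + t) ^ (-3 : ℝ) := by
        simp [hh, htdef]
      rw [hhw, hK]
      calc Real.exp ((p * R + 3) * Real.log R - p * R ^ 2 / 4 - 3 * Real.log t)
          = 8 * Real.exp ((p * R + 3) * Real.log R - p * R ^ 2 / 4)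
            * ((1 / 8) * Real.exp (-3 * Real.log t)) := by
            rw [show (p * R + 3) * Real.log R - p * R ^ 2 / 4 - 3 * Real.log t
                = ((p * R + 3) * Real.log R - p * R ^ 2 / 4) + (-3 * Real.log t) by ring,
              Real.exp_add]
            ring
        _ ≤ 8 * Real.exp ((p * R + 3) * Real.log R - p * R ^ 2 / 4) * (1 + t) ^ (-3 : ℝ) := by
            have h8 : (0:ℝ) ≤ 8 * Real.exp ((p * R + 3) * Real.log R - p * R ^ 2 / 4) := by
              positivity
            exact mul_le_mul_of_nonneg_left (h2t' ▸ h2t) h8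
    refine le_trans ?_ hRHS
    rw [hLHS, Real.exp_le_exp]
    -- linear inequality in the logs
    have hq : (0:ℝ) ≤ R ^ 2 / 2 - R := by nlinarith
    have hc : p * R - p * R ^ 2 / 2 + 3 ≤ 0 := by
      nlinarith [mul_le_mul_of_nonneg_right hp hq]
    nlinarith [mul_nonneg (neg_nonneg.2 hc) (sub_nonneg.2 hlogle)]
  have hS : ∀ R : ℝ, MeasurableSet {w : ℂ | R < ‖w‖} := fun R =>
    measurableSet_lt measurable_const continuous_norm.measurable
  have hfnn : ∀ R : ℝ, ∀ w : ℂ,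
      0 ≤ ‖w‖ ^ (p * R) * (R ^ 2 / (Real.exp 1 * ‖w‖ ^ 2)) ^ (p * R ^ 2 / 4) :=
    fun R w => mul_nonneg (Real.rpow_nonneg (norm_nonneg w) _)
      (Real.rpow_nonneg (by positivity) _)
  -- upper bound for the integral
  have hupper : ∀ R : ℝ, 5 ≤ R →
      (∫ w in {w : ℂ | R < ‖w‖},
        ‖w‖ ^ (p * R) * (R ^ 2 / (Real.exp 1 * ‖w‖ ^ 2)) ^ (p * R ^ 2 / 4))
      ≤ K R * M := by
    intro R hR
    have hR0 : (0 : ℝ) < R := by linarith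
    have hKh : Integrable (fun w => K R * h w) := hint.const_mul _
    have hcont : ContinuousOn (fun w : ℂ =>
        ‖w‖ ^ (p * R) * (R ^ 2 / (Real.exp 1 * ‖w‖ ^ 2)) ^ (p * R ^ 2 / 4))
        {w : ℂ | R < ‖w‖} := by
      intro w hw
      have habs : (0 : ℝ) < ‖w‖ := lt_trans hR0 hw
      apply ContinuousAt.continuousWithinAt
      have h1 : ContinuousAt (fun w : ℂ => ‖w‖ ^ (p * R)) w :=
        (Real.continuousAt_rpow_const _ _ (Or.inl habs.ne')).comp
          continuous_norm.continuousAt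
      have hb : ContinuousAt (fun w : ℂ => R ^ 2 / (Real.exp 1 * ‖w‖ ^ 2)) w :=
        ContinuousAt.div continuousAt_const
          (continuousAt_const.mul ((continuous_norm.pow 2).continuousAt))
          (by positivity)
      have h2 : ContinuousAt (fun w : ℂ =>
          (R ^ 2 / (Real.exp 1 * ‖w‖ ^ 2)) ^ (p * R ^ 2 / 4)) w :=
        (Real.continuousAt_rpow_const _ _ (Or.inl (by positivity))).comp hb
      exact h1.mul h2
    have hfi : IntegrableOn (fun w : ℂ =>
        ‖w‖ ^ (p * R) * (R ^ 2 / (Real.exp 1 * ‖w‖ ^ 2)) ^ (p * R ^ 2 / 4))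
        {w : ℂ | R < ‖w‖} := by
      refine Integrable.mono' hKh.integrableOn (hcont.aestronglyMeasurable (hS R)) ?_
      filter_upwards [ae_restrict_mem (hS R)] with w hw
      rw [Real.norm_eq_abs, abs_of_nonneg (hfnn R w)]
      exact key R hR w hw
    calc (∫ w in {w : ℂ | R < ‖w‖},
          ‖w‖ ^ (p * R) * (R ^ 2 / (Real.exp 1 * ‖w‖ ^ 2)) ^ (p * R ^ 2 / 4))
        ≤ ∫ w in {w : ℂ | R < ‖w‖}, K R * h w :=
          setIntegral_mono_on hfi hKh.integrableOn (hS R) (fun w hw => key R hR w hw)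
      _ ≤ ∫ w, K R * h w :=
          setIntegral_le_integral hKh (Filter.Eventually.of_forall fun w =>
            mul_nonneg (hK0 R) (hnonneg w))
      _ = K R * M := by rw [integral_const_mul]
  -- K R * M → 0
  have hE : Filter.Tendsto (fun R => (p * R + 3) * Real.log R - p * R ^ 2 / 4)
      Filter.atTop Filter.atBot := by
    apply Filter.tendsto_atBot_mono' Filter.atTop ?_ Filter.tendsto_neg_atTop_atBot
    filter_upwards [Filter.eventually_ge_atTop (4096 : ℝ)] with R hR
    have hR0 : (0 : ℝ) < R := by linarith
    have hs : Real.sqrt R * Real.sqrt R = R := Real.mul_self_sqrt hR0.le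
    have h64 : (64 : ℝ) ≤ Real.sqrt R := by
      have h1 : Real.sqrt 4096 ≤ Real.sqrt R := Real.sqrt_le_sqrt hR
      rwa [show (4096 : ℝ) = 64 ^ 2 by norm_num,
        Real.sqrt_sq (by norm_num : (0:ℝ) ≤ 64)] at h1
    have hlog : Real.log R ≤ 2 * Real.sqrt R - 2 := by
      have hsp : 0 < Real.sqrt R := by positivity
      have h2 := Real.log_le_sub_one_of_pos hsp
      rw [Real.log_sqrt hR0.le] at h2
      linarith
    have hlog0 : 0 ≤ Real.log R := Real.log_nonneg (by linarith)
    have hs0 : (0:ℝ) ≤ Real.sqrt R := Real.sqrt_nonneg R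
    have h2s : 2 * Real.sqrt R ≤ R / 8 := by
      nlinarith [mul_le_mul_of_nonneg_right h64 hs0]
    have h1 : (p * R + 3) * Real.log R ≤ (p * R + 3) * (R / 8) :=
      mul_le_mul_of_nonneg_left (by linarith) (by nlinarith)
    have hpR : R ^ 2 ≤ p * R ^ 2 := le_mul_of_one_le_left (by positivity) hp
    nlinarith [h1, hpR, mul_nonneg (show (0:ℝ) ≤ R by linarith) (show (0:ℝ) ≤ R - 11 by linarith)]
  have hKM : Filter.Tendsto (fun R => K R * M) Filter.atTop (nhds 0) := by
    have hc := (Real.tendsto_exp_atBot.comp hE).const_mul (8 * M)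
    rw [mul_zero] at hc
    refine hc.congr fun R => ?_
    simp only [hK, Function.comp]
    ring
  refine tendsto_of_tendsto_of_tendsto_of_le_of_le' tendsto_const_nhds hKM ?_ ?_
  · exact Filter.Eventually.of_forall fun R => setIntegral_nonneg (hS R) fun w _ => hfnn R w
  · filter_upwards [Filter.eventually_ge_atTop (5 : ℝ)] with R hR
    exact hupper R hR
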